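/- Let v and i be natural numbers with 2i ≤ v. The number of i-matchings of the complete graph on v vertices, i.e. the number of sets of i pairwise disjoint edges of the complete graph K_v, equals v! / ((v−2i)! · i! · 2^i). -/

import Mathlib

open Finset

private def eFin (v : ℕ) (e : Sym2 (Fin v)) : Finset (Fin v) :=
  Finset.univ.filter (· ∈ e)

private lemma mem_eFin {v : ℕ} {e : Sym2 (Fin v)} {a : Fin v} : a ∈ eFin v e ↔ a ∈ e := by
  simp [eFin]

private lemma card_eFin {v : ℕ} {e : Sym2 (Fin v)} (he : ¬ e.IsDiag) : (eFin v e).card = 2 := by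
  induction e using Sym2.ind with
  | _ x y =>
    rw [Sym2.mk_isDiag_iff] at he
    have hx : eFin v s(x, y) = {x, y} := by
      ext a; simp [mem_eFin]
    rw [hx, card_insert_of_notMem (by simp [he]), card_singleton]

private def mset (v i : ℕ) : Finset (Finset (Sym2 (Fin v))) :=
  Finset.univ.filter (fun M => M.card = i ∧ (∀ e ∈ M, ¬ e.IsDiag) ∧
    ∀ e ∈ M, ∀ f ∈ M, e ≠ f → ∀ a : Fin v, a ∈ e → a ∉ f)

private lemma mem_mset {v i : ℕ} {M : Finset (Sym2 (Fin v))} :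
    M ∈ mset v i ↔ M.card = i ∧ (∀ e ∈ M, ¬ e.IsDiag) ∧
      ∀ e ∈ M, ∀ f ∈ M, e ≠ f → ∀ a : Fin v, a ∈ e → a ∉ f := by
  simp [mset]

private def supp (v : ℕ) (M : Finset (Sym2 (Fin v))) : Finset (Fin v) := M.biUnion (eFin v)

private lemma mem_supp {v : ℕ} {M : Finset (Sym2 (Fin v))} {a : Fin v} :
    a ∈ supp v M ↔ ∃ e ∈ M, a ∈ e := by simp [supp, mem_eFin]

private lemma card_supp {v i : ℕ} {M : Finset (Sym2 (Fin v))} (hM : M ∈ mset v i) :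
    (supp v M).card = 2 * i := by
  rw [mem_mset] at hM
  obtain ⟨hc, hd, hdisj⟩ := hM
  rw [supp, card_biUnion (by
    intro e he f hf hef
    simp only [Finset.disjoint_left, mem_eFin]
    intro a hae haf
    exact hdisj e he f hf hef a hae haf)]
  rw [Finset.sum_congr rfl (fun e he => card_eFin (hd e he)), Finset.sum_const, hc,
    smul_eq_mul, mul_comm]

private lemma card_sym2_filter_not_isDiag {v : ℕ} (s : Finset (Fin v)) :
    (s.sym2.filter (fun e => ¬ e.IsDiag)).card = s.card.choose 2 := by
  have hdiag : s.sym2.filter (fun e => e.IsDiag) = s.image Sym2.diag := by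
    ext e
    simp only [mem_filter, mem_image, Finset.mem_sym2_iff]
    constructor
    · rintro ⟨hmem, hd⟩
      obtain ⟨a, rfl⟩ := (⟨_, Sym2.diag_diagElem hd⟩ : ∃ a, Sym2.diag a = e)
      exact ⟨a, hmem a (by simp [Sym2.diag]), rfl⟩
    · rintro ⟨a, ha, rfl⟩
      refine ⟨fun b hb => ?_, Sym2.diag_isDiag a⟩
      simp only [Sym2.diag, Sym2.mem_iff] at hb
      rcases hb with rfl | rfl <;> exact ha
  have h1 := Finset.card_filter_add_card_filter_not
    (s := s.sym2) (p := fun e => e.IsDiag)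
  rw [hdiag, Finset.card_image_of_injective _ Sym2.diag_injective, Finset.card_sym2] at h1
  have h2 : (s.card + 1).choose 2 = s.card.choose 2 + s.card := by
    rw [Nat.choose_succ_succ, Nat.choose_one_right, Nat.add_comm]
  omega

private def vEdges (v : ℕ) (M : Finset (Sym2 (Fin v))) : Finset (Sym2 (Fin v)) :=
  ((supp v M)ᶜ.sym2).filter (fun e => ¬ e.IsDiag)

private lemma mem_vEdges {v : ℕ} {M : Finset (Sym2 (Fin v))} {e : Sym2 (Fin v)} :
    e ∈ vEdges v M ↔ ¬ e.IsDiag ∧ ∀ a ∈ e, a ∉ supp v M := by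
  simp only [vEdges, mem_filter, Finset.mem_sym2_iff, Finset.mem_compl]
  tauto

private lemma card_vEdges {v i : ℕ} {M : Finset (Sym2 (Fin v))} (hM : M ∈ mset v i) :
    (vEdges v M).card = (v - 2 * i).choose 2 := by
  rw [vEdges, card_sym2_filter_not_isDiag, Finset.card_compl, card_supp hM, Fintype.card_fin]

private lemma key (v i : ℕ) :
    (mset v (i + 1)).card * (i + 1) = (mset v i).card * ((v - 2 * i).choose 2) := by
  classical
  have hbij : ((mset v (i + 1)).sigma (fun M => M)).card
      = ((mset v i).sigma (fun M => vEdges v M)).card := by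
    apply Finset.card_nbij' (fun p => ⟨p.1.erase p.2, p.2⟩) (fun p => ⟨insert p.2 p.1, p.2⟩)
    · rintro ⟨M, e⟩ hp
      rw [mem_coe, mem_sigma] at hp
      obtain ⟨hM, he⟩ := hp
      rw [mem_mset] at hM
      obtain ⟨hc, hd, hdisj⟩ := hM
      rw [mem_coe, mem_sigma]
      constructor
      · rw [mem_mset]
        refine ⟨by rw [card_erase_of_mem he, hc]; omega, fun f hf => hd f (mem_of_mem_erase hf),
          fun f hf g hg hfg a haf => hdisj f (mem_of_mem_erase hf) g (mem_of_mem_erase hg) hfg a haf⟩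
      · rw [mem_vEdges]
        refine ⟨hd e he, fun a hae ha => ?_⟩
        rw [mem_supp] at ha
        obtain ⟨f, hf, haf⟩ := ha
        exact hdisj e he f (mem_of_mem_erase hf) (Ne.symm (ne_of_mem_erase hf)) a hae haf
    · rintro ⟨M, e⟩ hp
      rw [mem_coe, mem_sigma] at hp
      obtain ⟨hM, he⟩ := hp
      rw [mem_vEdges] at he
      obtain ⟨hed, hesupp⟩ := he
      rw [mem_mset] at hM
      obtain ⟨hc, hd, hdisj⟩ := hM
      have heM : e ∉ M := by
        intro heM
        exact hesupp e.out.1 (Sym2.out_fst_mem e) (mem_supp.2 ⟨e, heM, Sym2.out_fst_mem e⟩)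
      rw [mem_coe, mem_sigma]
      constructor
      · rw [mem_mset]
        refine ⟨by rw [card_insert_of_notMem heM, hc], ?_, ?_⟩
        · intro f hf
          rcases mem_insert.1 hf with rfl | hf
          · exact hed
          · exact hd f hf
        · intro f hf g hg hfg a haf hag
          rcases mem_insert.1 hf with rfl | hf <;> rcases mem_insert.1 hg with rfl | hg
          · exact hfg rfl
          · exact hesupp a haf (mem_supp.2 ⟨g, hg, hag⟩)
          · exact hesupp a hag (mem_supp.2 ⟨f, hf, haf⟩)
          · exact hdisj f hf g hg hfg a haf hag
      · exact mem_insert_self e M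
    · rintro ⟨M, e⟩ hp
      rw [mem_coe, mem_sigma] at hp
      simp [Finset.insert_erase hp.2]
    · rintro ⟨M, e⟩ hp
      rw [mem_coe, mem_sigma] at hp
      obtain ⟨hM, he⟩ := hp
      rw [mem_vEdges] at he
      have heM : e ∉ M := by
        intro heM
        exact he.2 e.out.1 (Sym2.out_fst_mem e) (mem_supp.2 ⟨e, heM, Sym2.out_fst_mem e⟩)
      simp [Finset.erase_insert heM]
  rw [Finset.card_sigma, Finset.card_sigma] at hbij
  rw [Finset.sum_congr rfl (fun M hM => (mem_mset.1 hM).1), Finset.sum_const, smul_eq_mul] at hbij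
  rw [Finset.sum_congr rfl (fun M hM => card_vEdges hM), Finset.sum_const, smul_eq_mul] at hbij
  exact hbij

private lemma mset_count (v : ℕ) : ∀ i : ℕ, 2 * i ≤ v →
    (mset v i).card * ((v - 2 * i).factorial * i.factorial * 2 ^ i) = v.factorial := by
  intro i
  induction i with
  | zero =>
    intro _
    have h0 : mset v 0 = {∅} := by
      ext M
      simp only [mem_mset, Finset.card_eq_zero, mem_singleton]
      constructor
      · rintro ⟨rfl, -, -⟩; rfl
      · rintro rfl; simp
    simp [h0]
  | succ i ih =>
    intro h
    have h2i : 2 * i ≤ v := by omega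
    have hkey := key v i
    have hch : (v - 2 * i).choose 2 * 2 * (v - 2 * i - 2).factorial = (v - 2 * i).factorial := by
      have h2 : 2 ≤ v - 2 * i := by omega
      have := Nat.choose_mul_factorial_mul_factorial h2
      norm_num [Nat.factorial] at this ⊢
      linarith [this]
    have hsub : v - 2 * (i + 1) = v - 2 * i - 2 := by omega
    rw [hsub, Nat.factorial_succ, pow_succ]
    calc (mset v (i + 1)).card * ((v - 2 * i - 2).factorial * ((i + 1) * i.factorial) * (2 ^ i * 2))
        = ((mset v (i + 1)).card * (i + 1)) *
            ((v - 2 * i - 2).factorial * 2 * i.factorial * 2 ^ i) := by ring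
      _ = ((mset v i).card * ((v - 2 * i).choose 2)) *
            ((v - 2 * i - 2).factorial * 2 * i.factorial * 2 ^ i) := by rw [hkey]
      _ = (mset v i).card *
            (((v - 2 * i).choose 2 * 2 * (v - 2 * i - 2).factorial) * i.factorial * 2 ^ i) := by
            ring
      _ = (mset v i).card * ((v - 2 * i).factorial * i.factorial * 2 ^ i) := by rw [hch]
      _ = v.factorial := ih h2i

/-- The number of `i`-matchings of the complete graph on `v` vertices — i.e. the number of
sets of `i` pairwise disjoint edges of `K_v` — equals `v! / ((v - 2i)! · i! · 2^i)`
whenever `2i ≤ v`. -/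
theorem complete_graph_matchings_count (v i : ℕ) (h : 2 * i ≤ v) :
    ({M : Finset (Sym2 (Fin v)) |
        M.card = i ∧
        (∀ e ∈ M, e ∈ (SimpleGraph.completeGraph (Fin v)).edgeSet) ∧
        (∀ e ∈ M, ∀ f ∈ M, e ≠ f → ∀ a : Fin v, a ∈ e → a ∉ f)}.ncard : ℚ) =
      (v.factorial : ℚ) /
        ((v - 2 * i).factorial * i.factorial * 2 ^ i) := by
  have hset : {M : Finset (Sym2 (Fin v)) |
        M.card = i ∧
        (∀ e ∈ M, e ∈ (SimpleGraph.completeGraph (Fin v)).edgeSet) ∧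
        (∀ e ∈ M, ∀ f ∈ M, e ≠ f → ∀ a : Fin v, a ∈ e → a ∉ f)} = ↑(mset v i) := by
    ext M
    simp [mem_mset, SimpleGraph.completeGraph_eq_top, SimpleGraph.edgeSet_top]
  rw [hset, Set.ncard_coe_finset]
  have hn := mset_count v i h
  have hq : ((mset v i).card : ℚ) *
      (((v - 2 * i).factorial : ℚ) * (i.factorial : ℚ) * 2 ^ i) = (v.factorial : ℚ) := by
    exact_mod_cast hn
  have hden : (((v - 2 * i).factorial : ℚ) * (i.factorial : ℚ) * 2 ^ i) ≠ 0 := by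
    have h1 := Nat.factorial_pos (v - 2 * i)
    have h2 := Nat.factorial_pos i
    positivity
  rw [eq_div_iff hden]
  exact hq
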